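/- Let p and q be nonzero integers. Then there is a group isomorphism from the group L_{p,q} with presentation < a, b, t | t a^p t^{-1} = b^{-1} a^p, t b^{-q} a^{-1} t^{-1} = b^{-q} > to the group W_{p,q} with presentation < x, y | ((yx)^q (xy)^{-q})^p y = x^{-1} ((yx)^q (xy)^{-q})^p > which sends b to x y and sends t to y^{-1}. -/

import Mathlib

/-- The relators of the presentation
`< a, b, t | t a^p t⁻¹ = b⁻¹ a^p, t b^{-q} a⁻¹ t⁻¹ = b^{-q} >` of the knot group of the
double twist knot `K_{p,q}`, where `a`, `b`, `t` are the generators `0`, `1`, `2`. -/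
def lpqRels (p q : ℤ) : Set (FreeGroup (Fin 3)) :=
  let a : FreeGroup (Fin 3) := FreeGroup.of 0
  let b : FreeGroup (Fin 3) := FreeGroup.of 1
  let t : FreeGroup (Fin 3) := FreeGroup.of 2
  { t * a ^ p * t⁻¹ * (b⁻¹ * a ^ p)⁻¹,
    t * b ^ (-q) * a⁻¹ * t⁻¹ * (b ^ (-q))⁻¹ }

/-- The group `L_{p,q}`. -/
abbrev Lpq (p q : ℤ) := PresentedGroup (lpqRels p q)

/-- The relator of the presentation
`< x, y | ((yx)^q (xy)^{-q})^p y = x⁻¹ ((yx)^q (xy)^{-q})^p >` of the knot group of the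
double twist knot `K_{p,q}`, where `x`, `y` are the generators `0`, `1`. -/
def wpqRels (p q : ℤ) : Set (FreeGroup (Fin 2)) :=
  let x : FreeGroup (Fin 2) := FreeGroup.of 0
  let y : FreeGroup (Fin 2) := FreeGroup.of 1
  { ((y * x) ^ q * (x * y) ^ (-q)) ^ p * y *
      (x⁻¹ * ((y * x) ^ q * (x * y) ^ (-q)) ^ p)⁻¹ }

/-- The group `W_{p,q}`. -/
abbrev Wpq (p q : ℤ) := PresentedGroup (wpqRels p q)

private lemma presented_rel_eq_one {α : Type*} {rels : Set (FreeGroup α)} {r : FreeGroup α}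
    (hr : r ∈ rels) : PresentedGroup.mk rels r = 1 :=
  (QuotientGroup.eq_one_iff _).mpr (Subgroup.subset_normalClosure hr)

/-- there is an isomorphism `L_{p,q} ≃* W_{p,q}` sending `b` to `x y` and
`t` to `y⁻¹`. -/
theorem lpq_iso_wpq (p q : ℤ) (hp : p ≠ 0) (hq : q ≠ 0) :
    letI x : Wpq p q := PresentedGroup.of 0
    letI y : Wpq p q := PresentedGroup.of 1
    ∃ φ : Lpq p q ≃* Wpq p q,
      φ (PresentedGroup.of 1) = x * y ∧ φ (PresentedGroup.of 2) = y⁻¹ := by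
  classical
  set X : Wpq p q := PresentedGroup.of 0 with hX
  set Y : Wpq p q := PresentedGroup.of 1 with hY
  set B : Lpq p q := PresentedGroup.of 1 with hB
  set A : Lpq p q := PresentedGroup.of 0 with hA
  set T : Lpq p q := PresentedGroup.of 2 with hT
  -- the relation of W
  have hW : ((Y * X) ^ q * (X * Y) ^ (-q)) ^ p * Y = X⁻¹ * ((Y * X) ^ q * (X * Y) ^ (-q)) ^ p := by
    have h := presented_rel_eq_one (rels := wpqRels p q)
      (r := ((FreeGroup.of 1 * FreeGroup.of 0) ^ q * (FreeGroup.of 0 * FreeGroup.of 1) ^ (-q)) ^ p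
        * FreeGroup.of 1 * ((FreeGroup.of 0)⁻¹ *
          ((FreeGroup.of 1 * FreeGroup.of 0) ^ q * (FreeGroup.of 0 * FreeGroup.of 1) ^ (-q)) ^ p)⁻¹)
      (by simp [wpqRels])
    simp only [map_mul, map_zpow, map_inv, mul_inv_eq_one] at h
    exact h
  -- the relations of L
  have hL1 : T * A ^ p * T⁻¹ = B⁻¹ * A ^ p := by
    have h := presented_rel_eq_one (rels := lpqRels p q)
      (r := FreeGroup.of 2 * FreeGroup.of 0 ^ p * (FreeGroup.of 2)⁻¹ *
        ((FreeGroup.of 1)⁻¹ * FreeGroup.of 0 ^ p)⁻¹)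
      (by simp [lpqRels])
    simp only [map_mul, map_zpow, map_inv, mul_inv_eq_one] at h
    exact h
  have hL2 : T * B ^ (-q) * A⁻¹ * T⁻¹ = B ^ (-q) := by
    have h := presented_rel_eq_one (rels := lpqRels p q)
      (r := FreeGroup.of 2 * FreeGroup.of 1 ^ (-q) * (FreeGroup.of 0)⁻¹ * (FreeGroup.of 2)⁻¹ *
        ((FreeGroup.of 1) ^ (-q))⁻¹)
      (by simp [lpqRels])
    simp only [map_mul, map_zpow, map_inv, mul_inv_eq_one] at h
    exact h
  have hAeq : A = T⁻¹ * B ^ q * T * B ^ (-q) := by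
    have h2 : A⁻¹ = B ^ q * T⁻¹ * (B ^ (-q) * T) := by
      calc A⁻¹ = B ^ q * T⁻¹ * (T * B ^ (-q) * A⁻¹ * T⁻¹ * T) := by group
        _ = B ^ q * T⁻¹ * (B ^ (-q) * T) := by rw [hL2]
    rw [← inv_inv A, h2]; group
  -- the forward map
  have hfW : ∀ r ∈ lpqRels p q,
      (FreeGroup.lift ![(Y * X) ^ q * (X * Y) ^ (-q), X * Y, Y⁻¹]) r = 1 := by
    intro r hr
    simp only [lpqRels, Set.mem_insert_iff, Set.mem_singleton_iff] at hr
    rcases hr with rfl | rfl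
    · simp only [map_mul, map_zpow, map_inv, FreeGroup.lift_apply_of, Matrix.cons_val_zero,
        Matrix.cons_val_one, Matrix.head_cons, Matrix.cons_val_two, Matrix.tail_cons]
      rw [mul_inv_eq_one, inv_inv, mul_assoc, hW]
      group
    · simp only [map_mul, map_zpow, map_inv, FreeGroup.lift_apply_of, Matrix.cons_val_zero,
        Matrix.cons_val_one, Matrix.head_cons, Matrix.cons_val_two, Matrix.tail_cons]
      have hc : (Y * X) ^ q = Y * (X * Y) ^ q * Y⁻¹ := by
        rw [← conj_zpow]; group
      rw [mul_inv_eq_one, inv_inv, mul_inv_rev, hc]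
      group
  -- the backward map
  have hgL : ∀ r ∈ wpqRels p q, (FreeGroup.lift ![B * T, T⁻¹]) r = 1 := by
    intro r hr
    simp only [wpqRels, Set.mem_singleton_iff] at hr
    subst hr
    simp only [map_mul, map_zpow, map_inv, FreeGroup.lift_apply_of, Matrix.cons_val_zero,
      Matrix.cons_val_one, Matrix.head_cons]
    have hc : (T⁻¹ * (B * T)) ^ q * (B * T * T⁻¹) ^ (-q) = A := by
      rw [hAeq]
      have : (T⁻¹ * (B * T)) ^ q = T⁻¹ * B ^ q * T := by
        rw [show T⁻¹ * (B * T) = T⁻¹ * B * T⁻¹⁻¹ by group, conj_zpow]; group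
      rw [this, show B * T * T⁻¹ = B by group]
    rw [hc, mul_inv_eq_one]
    have h1 : A ^ p * T⁻¹ = T⁻¹ * (B⁻¹ * A ^ p) := by
      rw [← hL1]; group
    rw [h1]; group
  set φ : Lpq p q →* Wpq p q := PresentedGroup.toGroup hfW with hφ
  set ψ : Wpq p q →* Lpq p q := PresentedGroup.toGroup hgL with hψ
  have hψφ : ψ.comp φ = MonoidHom.id _ := by
    ext i
    fin_cases i
    · show ψ (φ A) = A
      rw [hφ, hA, PresentedGroup.toGroup.of]
      simp only [Matrix.cons_val_zero, map_mul, map_zpow]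
      rw [hψ]
      simp only [hX, hY, PresentedGroup.toGroup.of, Matrix.cons_val_zero, Matrix.cons_val_one,
        Matrix.head_cons]
      rw [← hA, hAeq]
      have : (T⁻¹ * (B * T)) ^ q = T⁻¹ * B ^ q * T := by
        rw [show T⁻¹ * (B * T) = T⁻¹ * B * T⁻¹⁻¹ by group, conj_zpow]; group
      rw [this, show B * T * T⁻¹ = B by group]
    · show ψ (φ B) = B
      rw [hφ, hB, PresentedGroup.toGroup.of]
      simp only [Matrix.cons_val_one, Matrix.cons_val_zero, Matrix.head_cons, map_mul]
      rw [hψ]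
      simp only [hX, hY, PresentedGroup.toGroup.of, Matrix.cons_val_zero, Matrix.cons_val_one,
        Matrix.head_cons]
      group
      rfl
    · show ψ (φ T) = T
      rw [hφ, hT, PresentedGroup.toGroup.of]
      simp only [Matrix.cons_val_two, Matrix.cons_val_zero, Matrix.tail_cons, Matrix.head_cons, map_inv]
      rw [hψ]
      simp only [hY, PresentedGroup.toGroup.of, Matrix.cons_val_one, Matrix.cons_val_zero, Matrix.head_cons]
      group
      rfl
  have hφψ : φ.comp ψ = MonoidHom.id _ := by
    ext i
    fin_cases i
    · show φ (ψ X) = X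
      rw [hψ, hX, PresentedGroup.toGroup.of]
      simp only [Matrix.cons_val_zero, map_mul]
      rw [hφ]
      simp only [hB, hT, PresentedGroup.toGroup.of, Matrix.cons_val_one, Matrix.cons_val_zero, Matrix.head_cons,
        Matrix.cons_val_two, Matrix.tail_cons]
      group
      rfl
    · show φ (ψ Y) = Y
      rw [hψ, hY, PresentedGroup.toGroup.of]
      simp only [Matrix.cons_val_one, Matrix.cons_val_zero, Matrix.head_cons, map_inv]
      rw [hφ]
      simp only [hT, PresentedGroup.toGroup.of, Matrix.cons_val_two, Matrix.cons_val_zero, Matrix.tail_cons,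
        Matrix.head_cons]
      group
      rfl
  refine ⟨MonoidHom.toMulEquiv φ ψ hψφ hφψ, ?_, ?_⟩
  · show φ B = X * Y
    rw [hφ, hB, PresentedGroup.toGroup.of]
    simp
  · show φ T = Y⁻¹
    rw [hφ, hT, PresentedGroup.toGroup.of]
    simp
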